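/- arXiv:2401.09656 — 2 statements merged into one kernel-verified Lean document; each statement's English description precedes it below -/
import Mathlib

section
/- Drift of a local gradient-descent trajectory from the centralized trajectory: if w^(0) = v^(0), w^(τ) = w^(τ−1) − η∇f(w^(τ−1)) and v^(τ) = v^(τ−1) − η∇F(v^(τ−1)) for τ ≥ 1, then for every integer τ₀ ≥ 0, ‖w^(τ₀) − v^(τ₀)‖ ≤ (δ/β)·[(1 + ηβ)^{τ₀} − 1]. -/
/-- Drift of a local gradient-descent trajectory from the centralized trajectory: if
`w⁰ = v⁰`, `wᵗ = wᵗ⁻¹ − η∇f(wᵗ⁻¹)` and `vᵗ = vᵗ⁻¹ − η∇F(vᵗ⁻¹)`, then for every `τ₀ ≥ 0`,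
`‖w^{τ₀} − v^{τ₀}‖ ≤ (δ/β)·[(1 + ηβ)^{τ₀} − 1]`. -/
theorem stmt14 {d : ℕ} (f F : EuclideanSpace ℝ (Fin d) → ℝ) (β δ η : ℝ)
    (hβ : 0 < β) (hδ : 0 ≤ δ) (hη : 0 < η)
    (hf : Differentiable ℝ f) (hF : Differentiable ℝ F)
    (hsmooth : ∀ x y, ‖gradient f x - gradient f y‖ ≤ β * ‖x - y‖)
    (hgraddiff : ∀ x, ‖gradient f x - gradient F x‖ ≤ δ)
    (w v : ℕ → EuclideanSpace ℝ (Fin d))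
    (h0 : w 0 = v 0)
    (hw : ∀ τ : ℕ, w (τ + 1) = w τ - η • gradient f (w τ))
    (hv : ∀ τ : ℕ, v (τ + 1) = v τ - η • gradient F (v τ)) :
    ∀ τ₀ : ℕ, ‖w τ₀ - v τ₀‖ ≤ δ / β * ((1 + η * β) ^ τ₀ - 1) := by
  intro τ₀
  induction τ₀ with
  | zero => simp [h0]
  | succ τ ih =>
    have key : w (τ + 1) - v (τ + 1)
        = (w τ - v τ) - η • (gradient f (w τ) - gradient f (v τ))
          - η • (gradient f (v τ) - gradient F (v τ)) := by
      rw [hw, hv]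
      module
    have h1 : ‖w (τ + 1) - v (τ + 1)‖
        ≤ ‖w τ - v τ‖ + η * ‖gradient f (w τ) - gradient f (v τ)‖
          + η * ‖gradient f (v τ) - gradient F (v τ)‖ := by
      have hs : ∀ x : EuclideanSpace ℝ (Fin d), ‖η • x‖ = η * ‖x‖ := fun x => by
        rw [norm_smul, Real.norm_eq_abs, abs_of_pos hη]
      rw [key]
      refine (norm_sub_le _ _).trans ?_
      rw [hs]
      gcongr
      refine (norm_sub_le _ _).trans ?_
      rw [hs]
    have h2 : ‖w (τ + 1) - v (τ + 1)‖
        ≤ (1 + η * β) * ‖w τ - v τ‖ + η * δ := by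
      calc ‖w (τ + 1) - v (τ + 1)‖
          ≤ ‖w τ - v τ‖ + η * (β * ‖w τ - v τ‖) + η * δ := by
            refine h1.trans ?_
            gcongr
            · exact hsmooth _ _
            · exact hgraddiff _
        _ = (1 + η * β) * ‖w τ - v τ‖ + η * δ := by ring
    refine h2.trans ?_
    have hpos : (0:ℝ) ≤ 1 + η * β := by positivity
    calc (1 + η * β) * ‖w τ - v τ‖ + η * δ
        ≤ (1 + η * β) * (δ / β * ((1 + η * β) ^ τ - 1)) + η * δ := by gcongr
      _ = δ / β * ((1 + η * β) ^ (τ + 1) - 1) := by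
          field_simp
          ring
end

section
/- Drift of a virtual edge average under pure local updates (no intra-cluster aggregation): if each w_m^(τ) = w_m^(τ−1) − η∇f_m(w_m^(τ−1)) and v^(τ) = v^(τ−1) − η∇F(v^(τ−1)) with a common start w_m^(0) = v^(0) for all m ∈ S, then for every integer τ₀ ≥ 0, ‖Σ_{m∈S} α_m w_m^(τ₀) − v^(τ₀)‖ ≤ (δ_S/β)·[(1 + ηβ)^{τ₀} − 1] − η·τ₀·(δ_S − Δ_S). -/
open scoped BigOperators
open InnerProductSpace

lemma stmt18_gradsum {d : ℕ} {ι : Type*} (S : Finset ι)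
    (f : ι → EuclideanSpace ℝ (Fin d) → ℝ)
    (hf : ∀ m ∈ S, Differentiable ℝ (f m)) (α : ι → ℝ) (x : EuclideanSpace ℝ (Fin d)) :
    HasGradientAt (fun x => ∑ m ∈ S, α m * f m x) (∑ m ∈ S, α m • gradient (f m) x) x := by
  rw [hasGradientAt_iff_hasFDerivAt, map_sum]
  have := HasFDerivAt.fun_sum (fun m hm => ((hf m hm x).hasGradientAt.hasFDerivAt).const_mul (α m))
  refine this.congr_fderiv (Finset.sum_congr rfl fun m _ => ?_)
  simp [LinearIsometryEquiv.map_smulₛₗ]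

/-- Drift of a virtual edge average under pure local updates (no intra-cluster aggregation):
if each `w_m^(τ) = w_m^(τ−1) − η∇f_m(w_m^(τ−1))` and `v^(τ) = v^(τ−1) − η∇F(v^(τ−1))` with a
common start `w_m^(0) = v^(0)`, then for every `τ₀ ≥ 0`,
`‖Σ_{m∈S} α_m w_m^(τ₀) − v^(τ₀)‖ ≤ (δ_S/β)·[(1 + ηβ)^{τ₀} − 1] − η·τ₀·(δ_S − Δ_S)`. -/
theorem stmt18 {d : ℕ} {ι : Type*} (S : Finset ι)
    (f : ι → EuclideanSpace ℝ (Fin d) → ℝ) (β η : ℝ) (hβ : 0 < β) (hη : 0 < η)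
    (hf : ∀ m ∈ S, Differentiable ℝ (f m))
    (hsmooth : ∀ m ∈ S, ∀ x y, ‖gradient (f m) x - gradient (f m) y‖ ≤ β * ‖x - y‖)
    (α : ι → ℝ) (hα : ∀ m ∈ S, 0 < α m) (hαsum : ∑ m ∈ S, α m = 1)
    (F : EuclideanSpace ℝ (Fin d) → ℝ) (hFdiff : Differentiable ℝ F)
    (δm : ι → ℝ) (hδm : ∀ m ∈ S, ∀ x, ‖gradient (f m) x - gradient F x‖ ≤ δm m)
    (δS : ℝ) (hδS : δS = ∑ m ∈ S, α m * δm m)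
    (G : EuclideanSpace ℝ (Fin d) → ℝ) (hG : G = fun x => ∑ m ∈ S, α m * f m x)
    (ΔS : ℝ) (hΔS : ∀ x, ‖gradient G x - gradient F x‖ ≤ ΔS) (hΔδ : ΔS ≤ δS)
    (w : ℕ → ι → EuclideanSpace ℝ (Fin d)) (v : ℕ → EuclideanSpace ℝ (Fin d))
    (h0 : ∀ m ∈ S, w 0 m = v 0)
    (hw : ∀ τ : ℕ, ∀ m ∈ S, w (τ + 1) m = w τ m - η • gradient (f m) (w τ m))
    (hv : ∀ τ : ℕ, v (τ + 1) = v τ - η • gradient F (v τ)) :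
    ∀ τ₀ : ℕ, ‖(∑ m ∈ S, α m • w τ₀ m) - v τ₀‖ ≤
      δS / β * ((1 + η * β) ^ τ₀ - 1) - η * (τ₀ : ℝ) * (δS - ΔS) := by
  -- gradient of G
  have hGgrad : ∀ x, gradient G x = ∑ m ∈ S, α m • gradient (f m) x := by
    intro x
    rw [hG]
    exact (stmt18_gradsum S f hf α x).gradient
  -- per-machine drift recursion
  have hstep : ∀ τ, ∀ m ∈ S, ‖w (τ + 1) m - v (τ + 1)‖ ≤
      (1 + η * β) * ‖w τ m - v τ‖ + η * δm m := by
    intro τ m hm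
    have hkey : w (τ + 1) m - v (τ + 1) =
        (w τ m - v τ) - η • (gradient (f m) (w τ m) - gradient (f m) (v τ))
          - η • (gradient (f m) (v τ) - gradient F (v τ)) := by
      rw [hw τ m hm, hv τ, smul_sub, smul_sub]
      abel
    calc ‖w (τ + 1) m - v (τ + 1)‖
        ≤ ‖(w τ m - v τ) - η • (gradient (f m) (w τ m) - gradient (f m) (v τ))‖
          + ‖η • (gradient (f m) (v τ) - gradient F (v τ))‖ := by
          rw [hkey]; exact norm_sub_le _ _
      _ ≤ ‖w τ m - v τ‖ + ‖η • (gradient (f m) (w τ m) - gradient (f m) (v τ))‖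
          + ‖η • (gradient (f m) (v τ) - gradient F (v τ))‖ := by
          gcongr; exact norm_sub_le _ _
      _ ≤ ‖w τ m - v τ‖ + η * (β * ‖w τ m - v τ‖) + η * δm m := by
          rw [norm_smul, norm_smul, Real.norm_eq_abs, abs_of_pos hη]
          gcongr
          · exact hsmooth m hm _ _
          · exact hδm m hm _
      _ = (1 + η * β) * ‖w τ m - v τ‖ + η * δm m := by ring
  -- averaged drift bound
  set A : ℕ → ℝ := fun τ => ∑ m ∈ S, α m * ‖w τ m - v τ‖ with hA
  have hAbound : ∀ τ, A τ ≤ δS / β * ((1 + η * β) ^ τ - 1) := by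
    intro τ
    induction τ with
    | zero =>
      simp only [hA]
      rw [Finset.sum_congr rfl (fun m hm => by rw [h0 m hm])]
      simp
    | succ τ ih =>
      have h1 : A (τ + 1) ≤ (1 + η * β) * A τ + η * δS := by
        rw [hδS, Finset.mul_sum, Finset.mul_sum, ← Finset.sum_add_distrib]
        refine Finset.sum_le_sum fun m hm => ?_
        have := hstep τ m hm
        have hαm := (hα m hm).le
        calc α m * ‖w (τ + 1) m - v (τ + 1)‖
            ≤ α m * ((1 + η * β) * ‖w τ m - v τ‖ + η * δm m) := by
              exact mul_le_mul_of_nonneg_left this hαm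
          _ = (1 + η * β) * (α m * ‖w τ m - v τ‖) + η * (α m * δm m) := by ring
      have hpos : (0:ℝ) < 1 + η * β := by positivity
      have h2 : (1 + η * β) * A τ ≤ (1 + η * β) * (δS / β * ((1 + η * β) ^ τ - 1)) :=
        mul_le_mul_of_nonneg_left ih hpos.le
      have hβ' : (β:ℝ) ≠ 0 := hβ.ne'
      have : (1 + η * β) * (δS / β * ((1 + η * β) ^ τ - 1)) + η * δS
          = δS / β * ((1 + η * β) ^ (τ + 1) - 1) := by
        field_simp
        ring
      linarith
  -- main induction
  intro τ₀
  induction τ₀ with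
  | zero =>
    rw [Finset.sum_congr rfl (fun m hm => by rw [h0 m hm]), ← Finset.sum_smul, hαsum]
    simp
  | succ τ ih =>
    have hkey : (∑ m ∈ S, α m • w (τ + 1) m) - v (τ + 1) =
        ((∑ m ∈ S, α m • w τ m) - v τ)
          - η • (∑ m ∈ S, α m • (gradient (f m) (w τ m) - gradient (f m) (v τ)))
          - η • (gradient G (v τ) - gradient F (v τ)) := by
      rw [Finset.sum_congr rfl (fun m hm => by rw [hw τ m hm]), hv τ, hGgrad]
      simp only [smul_sub, Finset.sum_sub_distrib, Finset.smul_sum, smul_comm η]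
      abel
    have hnorm2 : ‖∑ m ∈ S, α m • (gradient (f m) (w τ m) - gradient (f m) (v τ))‖
        ≤ β * A τ := by
      calc ‖∑ m ∈ S, α m • (gradient (f m) (w τ m) - gradient (f m) (v τ))‖
          ≤ ∑ m ∈ S, ‖α m • (gradient (f m) (w τ m) - gradient (f m) (v τ))‖ :=
            norm_sum_le _ _
        _ ≤ ∑ m ∈ S, α m * (β * ‖w τ m - v τ‖) := by
            refine Finset.sum_le_sum fun m hm => ?_
            rw [norm_smul, Real.norm_eq_abs, abs_of_pos (hα m hm)]
            exact mul_le_mul_of_nonneg_left (hsmooth m hm _ _) (hα m hm).le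
        _ = β * A τ := by
            rw [hA, Finset.mul_sum]
            exact Finset.sum_congr rfl fun m _ => by ring
    have hbd : ‖(∑ m ∈ S, α m • w (τ + 1) m) - v (τ + 1)‖
        ≤ ‖(∑ m ∈ S, α m • w τ m) - v τ‖ + η * (β * A τ) + η * ΔS := by
      calc ‖(∑ m ∈ S, α m • w (τ + 1) m) - v (τ + 1)‖
          ≤ ‖((∑ m ∈ S, α m • w τ m) - v τ)
              - η • (∑ m ∈ S, α m • (gradient (f m) (w τ m) - gradient (f m) (v τ)))‖
            + ‖η • (gradient G (v τ) - gradient F (v τ))‖ := by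
            rw [hkey]; exact norm_sub_le _ _
        _ ≤ ‖(∑ m ∈ S, α m • w τ m) - v τ‖
            + ‖η • (∑ m ∈ S, α m • (gradient (f m) (w τ m) - gradient (f m) (v τ)))‖
            + ‖η • (gradient G (v τ) - gradient F (v τ))‖ := by
            gcongr; exact norm_sub_le _ _
        _ ≤ ‖(∑ m ∈ S, α m • w τ m) - v τ‖ + η * (β * A τ) + η * ΔS := by
            rw [norm_smul, norm_smul, Real.norm_eq_abs, abs_of_pos hη]
            gcongr
            exact hΔS _
    have hAτ := hAbound τ
    have hβ' : (β:ℝ) ≠ 0 := hβ.ne'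
    have hid : δS / β * ((1 + η * β) ^ τ - 1) - η * (τ : ℝ) * (δS - ΔS)
        + η * (β * (δS / β * ((1 + η * β) ^ τ - 1))) + η * ΔS
        = δS / β * ((1 + η * β) ^ (τ + 1) - 1) - η * ((τ : ℝ) + 1) * (δS - ΔS) := by
      field_simp
      ring
    have h3 : η * (β * A τ) ≤ η * (β * (δS / β * ((1 + η * β) ^ τ - 1))) := by
      gcongr
    push_cast
    linarith
end
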